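/- Holm–Bonferroni controls family-wise error: let D_1, ..., D_m : Ω → ℝ be P-values for m null hypotheses, let T ⊆ {1, ..., m} be the nonempty set of true null hypotheses with |T| = m₀, and suppose each D_i with i ∈ T is superuniform (P(D_i ≤ u) ≤ u for all u ∈ [0,1]). The Holm procedure at level δ sorts the P-values in increasing order as D_(1) ≤ ... ≤ D_(m), finds the minimal index j (starting from 1) with D_(j) > δ/(m − j + 1) (taking j = m + 1 if none exists), and rejects exactly the hypotheses at sorted positions 1, ..., j − 1. Then the probability that the Holm procedure rejects at least one hypothesis in T is at most δ. -/

import Mathlib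

open MeasureTheory

/-- The Holm procedure at level `δ` applied to the P-values `d : Fin m → ℝ` rejects the
hypothesis at (original) index `i`: sorting the P-values in increasing order as
`d ∘ Tuple.sort d`, the hypothesis at sorted position `j` (0-indexed, i.e. position `j + 1`
when 1-indexed) is rejected exactly when every sorted position `l ≤ j` satisfies
`d_(l) ≤ δ / (m - (l+1) + 1) = δ / (m - l)`, i.e. when the minimal sorted index at which the
Holm threshold is exceeded lies strictly beyond `j`. -/
def holmRejects {m : ℕ} (δ : ℝ) (d : Fin m → ℝ) (i : Fin m) : Prop :=
  ∃ j : Fin m, Tuple.sort d j = i ∧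
    ∀ l : Fin m, l ≤ j → d (Tuple.sort d l) ≤ δ / ((m : ℝ) - (l : ℝ))

/-- Deterministic key step: if Holm rejects some true null, then some true null P-value
is at most `δ / m₀`. -/
lemma holm_key {m : ℕ} (δ : ℝ) (hδ0 : 0 ≤ δ) (d : Fin m → ℝ) (T : Finset (Fin m))
    (i : Fin m) (hi : i ∈ T) (h : holmRejects δ d i) :
    ∃ i' ∈ T, d i' ≤ δ / (T.card : ℝ) := by
  obtain ⟨j, hji, hthr⟩ := h
  set σ := Tuple.sort d with hσ
  -- S : sorted positions mapping into T
  set S : Finset (Fin m) := Finset.univ.filter (fun l => σ l ∈ T) with hS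
  have hjS : j ∈ S := by simp [hS, hji, hi]
  have hSne : S.Nonempty := ⟨j, hjS⟩
  set k := S.min' hSne with hk
  have hkS : k ∈ S := S.min'_mem hSne
  have hkj : k ≤ j := S.min'_le j hjS
  have hkT : σ k ∈ T := by simpa [hS] using hkS
  -- all positions below k are outside T
  have hbelow : ∀ l : Fin m, l < k → σ l ∉ T := by
    intro l hl hlT
    have : k ≤ l := S.min'_le l (by simp [hS, hlT])
    exact absurd hl (not_lt.mpr this)
  -- card bound: k ≤ m - m₀
  have hcard : (k : ℕ) + T.card ≤ m := by
    have hinj : Function.Injective σ := σ.injective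
    have himg : (Finset.Iio k).image σ ⊆ Tᶜ := by
      intro x hx
      simp only [Finset.mem_image, Finset.mem_Iio] at hx
      obtain ⟨l, hl, rfl⟩ := hx
      simpa using hbelow l hl
    have h1 : ((Finset.Iio k).image σ).card = (k : ℕ) := by
      rw [Finset.card_image_of_injective _ hinj, Fin.card_Iio]
    have h2 : ((Finset.Iio k).image σ).card ≤ Tᶜ.card := Finset.card_le_card himg
    have h3 : Tᶜ.card = m - T.card := by
      rw [Finset.card_compl]; simp
    have h4 : T.card ≤ m := by
      simpa using Finset.card_le_univ T
    omega
  have hT0 : 0 < T.card := Finset.card_pos.mpr ⟨σ k, hkT⟩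
  have hdk : d (σ k) ≤ δ / ((m : ℝ) - (k : ℝ)) := hthr k hkj
  refine ⟨σ k, hkT, hdk.trans ?_⟩
  have hm₀ : (0 : ℝ) < (T.card : ℝ) := by exact_mod_cast hT0
  have hle : (T.card : ℝ) ≤ (m : ℝ) - (k : ℝ) := by
    have : (k : ℕ) + T.card ≤ m := hcard
    have := (Nat.cast_le (α := ℝ)).mpr this
    push_cast at this
    linarith
  exact div_le_div_of_nonneg_left hδ0 hm₀ hle

/-- **Holm–Bonferroni controls family-wise error.** Let `D 0, ..., D (m-1)` be
P-values for `m` null hypotheses, let `T` be the nonempty set of true null hypotheses, and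
suppose each `D i` with `i ∈ T` is superuniform. Then the probability that the Holm procedure
at level `δ` rejects at least one hypothesis in `T` is at most `δ`. -/
theorem holm_bonferroni_fwer
    {Ω : Type*} [MeasurableSpace Ω] (μ : Measure Ω) [IsProbabilityMeasure μ]
    (m : ℕ) (D : Fin m → Ω → ℝ)
    (T : Finset (Fin m)) (hT : T.Nonempty)
    (hsuper : ∀ i ∈ T, ∀ u : ℝ, 0 ≤ u → u ≤ 1 → (μ {ω | D i ω ≤ u}).toReal ≤ u)
    (δ : ℝ) (hδ0 : 0 ≤ δ) (hδ1 : δ ≤ 1) :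
    (μ {ω | ∃ i ∈ T, holmRejects δ (fun l => D l ω) i}).toReal ≤ δ := by
  set u : ℝ := δ / (T.card : ℝ) with hu
  have hT0 : 0 < T.card := Finset.card_pos.mpr hT
  have hm₀ : (0 : ℝ) < (T.card : ℝ) := by exact_mod_cast hT0
  have hm₀1 : (1 : ℝ) ≤ (T.card : ℝ) := by exact_mod_cast hT0
  have hu0 : 0 ≤ u := div_nonneg hδ0 hm₀.le
  have hu1 : u ≤ 1 := by
    rw [hu, div_le_one hm₀]; linarith
  -- event inclusion
  have hsub : {ω | ∃ i ∈ T, holmRejects δ (fun l => D l ω) i} ⊆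
      ⋃ i ∈ T, {ω | D i ω ≤ u} := by
    intro ω hω
    obtain ⟨i, hi, hrej⟩ := hω
    obtain ⟨i', hi', hle⟩ := holm_key δ hδ0 (fun l => D l ω) T i hi hrej
    exact Set.mem_biUnion hi' hle
  have hmono : μ {ω | ∃ i ∈ T, holmRejects δ (fun l => D l ω) i} ≤
      ∑ i ∈ T, μ {ω | D i ω ≤ u} :=
    le_trans (measure_mono hsub) (measure_biUnion_finset_le T _)
  have hfin : ∀ i ∈ T, μ {ω | D i ω ≤ u} ≠ ⊤ := fun i _ => measure_ne_top μ _
  calc (μ {ω | ∃ i ∈ T, holmRejects δ (fun l => D l ω) i}).toReal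
      ≤ (∑ i ∈ T, μ {ω | D i ω ≤ u}).toReal :=
        ENNReal.toReal_mono (by
          exact ENNReal.sum_ne_top.mpr hfin) hmono
    _ = ∑ i ∈ T, (μ {ω | D i ω ≤ u}).toReal := ENNReal.toReal_sum hfin
    _ ≤ ∑ _i ∈ T, u := Finset.sum_le_sum (fun i hi => hsuper i hi u hu0 hu1)
    _ = T.card * u := by rw [Finset.sum_const, nsmul_eq_mul]
    _ = δ := by rw [hu]; field_simp [hm₀.ne']
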